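/- Let S be a possibly infinite linear combination of resource terms with nonnegative rational coefficients, and let s̄ be a resource monomial in the support of S^!. If (s₁,…,sₙ) is any enumeration of the multiset s̄, then the coefficient of s̄ in S^! equals S^{s̄} / Card(St((s₁,…,sₙ))), where S^{s̄} = Π_{i=1}^n S_{sᵢ} and St((s₁,…,sₙ)) = {σ ∈ S_n | (s_{σ⁻¹(1)},…,s_{σ⁻¹(n)}) = (s₁,…,sₙ)} is the stabilizer of the tuple under the permutation action. -/

import Mathlib

set_option maxHeartbeats 1000000

/-! ### Rigid resource terms -/

/-- Rigid resource terms (de Bruijn indices for variables):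
`a ::= x | λ.a | ⟨a⟩b⃗ | a⊕• | •⊕a` where argument lists are ordered. -/
inductive Rt : Type
  | var : ℕ → Rt
  | lam : Rt → Rt
  | app : Rt → List Rt → Rt
  | inl : Rt → Rt
  | inr : Rt → Rt
deriving Inhabited

/-- Rigid resource expressions: terms or (rigid) monomials. -/
abbrev REx : Type := Rt ⊕ List Rt

/-! ### Isomorphism of rigid expressions -/

mutual
  /-- Two rigid terms are isomorphic (`≅`) when they differ only by
  permutations of argument lists. -/
  inductive IsoT : Rt → Rt → Prop
    | var (x : ℕ) : IsoT (.var x) (.var x)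
    | lam {a a'} : IsoT a a' → IsoT (.lam a) (.lam a')
    | inl {a a'} : IsoT a a' → IsoT (.inl a) (.inl a')
    | inr {a a'} : IsoT a a' → IsoT (.inr a) (.inr a')
    | app {c c' : Rt} {ds ds' : List Rt} :
        IsoT c c' → IsoM ds ds' → IsoT (.app c ds) (.app c' ds')
  /-- Isomorphism of rigid monomials: a permutation `σ` together with
  isomorphisms `aᵢ ≅ a'_{σ(i)}`. -/
  inductive IsoM : List Rt → List Rt → Prop
    | mk (as as' : List Rt) (h : as'.length = as.length) (σ : Equiv.Perm (Fin as.length))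
        (H : ∀ i : Fin as.length, IsoT (as.get i) (as'.get ((σ i).cast h.symm))) :
        IsoM as as'
end

/-! ### Resource expressions as quotients of rigid expressions -/

/-- Resource terms: rigid terms up to permutations of arguments, i.e. terms
whose argument lists are multisets. -/
def ResTerm : Type := Quot IsoT

instance : Inhabited ResTerm := ⟨Quot.mk _ (.var 0)⟩

/-- The resource term represented by a rigid term (`r ◁ |r|`). -/
def rmk : Rt → ResTerm := Quot.mk IsoT

/-- A choice of rigid representation of a resource term. -/
noncomputable def rout : ResTerm → Rt := Quot.out

/-- The resource monomial (multiset) represented by a rigid monomial (list). -/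
def toMul (bs : List Rt) : Multiset ResTerm := ↑(bs.map rmk)

/-- Resource expressions: terms or monomials (finite multisets of terms). -/
abbrev ResExpr : Type := ResTerm ⊕ Multiset ResTerm

/-- The resource expression represented by a rigid expression. -/
def toQ : REx → ResExpr := Sum.map rmk toMul

/-- A choice of rigid representation of a resource expression. -/
noncomputable def outE : ResExpr → REx :=
  Sum.map rout (fun m => m.toList.map rout)

/-- Variable as a resource term. -/
def qVar (x : ℕ) : ResTerm := rmk (.var x)

/-- Abstraction on resource terms. -/
noncomputable def qLam (s : ResTerm) : ResTerm := rmk (.lam (rout s))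

/-- Left injection `(-) ⊕ •` on resource terms. -/
noncomputable def qInl (s : ResTerm) : ResTerm := rmk (.inl (rout s))

/-- Right injection `• ⊕ (-)` on resource terms. -/
noncomputable def qInr (s : ResTerm) : ResTerm := rmk (.inr (rout s))

/-- Application `⟨s⟩t̄` of a resource term to a resource monomial. -/
noncomputable def qApp (s : ResTerm) (t : Multiset ResTerm) : ResTerm :=
  rmk (.app (rout s) (t.toList.map rout))

/-! ### Occurrence counting and rigid substitution -/

namespace Rt

/-- Shift free de Bruijn indices `≥ c` up by one in a rigid term. -/
def shiftR (c : ℕ) : Rt → Rt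
  | .var n => .var (if n < c then n else n + 1)
  | .lam a => .lam (a.shiftR (c + 1))
  | .inl a => .inl (a.shiftR c)
  | .inr a => .inr (a.shiftR c)
  | .app d es => .app (d.shiftR c) (es.attach.map fun e => e.1.shiftR c)
termination_by r => sizeOf r
decreasing_by
  all_goals simp_wf
  all_goals try omega
  all_goals (have := List.sizeOf_lt_of_mem e.2; omega)

end Rt

/-- Number of free occurrences `n_x(a)` of the variable `x` in a rigid term. -/
def nx (x : ℕ) : Rt → ℕ
  | .var n => if n = x then 1 else 0
  | .lam a => nx (x + 1) a
  | .inl a => nx x a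
  | .inr a => nx x a
  | .app d es => nx x d + (es.attach.map fun e => nx x e.1).sum
termination_by r => sizeOf r
decreasing_by
  all_goals simp_wf
  all_goals try omega
  all_goals (have := List.sizeOf_lt_of_mem e.2; omega)

/-- Number of free occurrences of `x` in a rigid monomial. -/
def nxL (x : ℕ) (l : List Rt) : ℕ := (l.map (nx x)).sum

/-- Number of free occurrences of `x` in a rigid expression. -/
def nxE (x : ℕ) : REx → ℕ := Sum.elim (nx x) (nxL x)

mutual
  /-- Rigid substitution `r[b⃗/x]`: the occurrences of `x` in `r`, taken from
  left to right, are replaced by the successive elements of `b⃗`; it is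
  undefined (`none`, i.e. the partial rigid expression `0`) unless `n_x(r) = |b⃗|`. -/
  def rsubst : Rt → ℕ → List Rt → Option Rt
    | .var n, x, bs =>
        if n = x then (match bs with | [b] => some b | _ => none)
        else (match bs with
              | [] => some (.var (if x < n then n - 1 else n))
              | _ => none)
    | .lam a, x, bs => (rsubst a (x + 1) (bs.map (Rt.shiftR 0))).map .lam
    | .inl a, x, bs => (rsubst a x bs).map .inl
    | .inr a, x, bs => (rsubst a x bs).map .inr
    | .app c ds, x, bs =>
        match rsubst c x (bs.take (nx x c)), rsubstL ds x (bs.drop (nx x c)) with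
        | some c', some ds' => some (.app c' ds')
        | _, _ => none
  /-- Rigid substitution in a rigid monomial. -/
  def rsubstL : List Rt → ℕ → List Rt → Option (List Rt)
    | [], _, bs => (match bs with | [] => some [] | _ => none)
    | a :: as, x, bs =>
        match rsubst a x (bs.take (nx x a)), rsubstL as x (bs.drop (nx x a)) with
        | some a', some as' => some (a' :: as')
        | _, _ => none
end

/-- Rigid substitution on rigid expressions. -/
def rsubstE : REx → ℕ → List Rt → Option REx
  | .inl r, x, bs => (rsubst r x bs).map .inl
  | .inr l, x, bs => (rsubstL l x bs).map .inr

/-- Left action of a permutation on a list: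
`σ·(b₁,…,bₙ) = (b_{σ⁻¹(1)},…,b_{σ⁻¹(n)})` (identity if the length is not `n`). -/
def permList {α : Type*} {n : ℕ} (σ : Equiv.Perm (Fin n)) (l : List α) : List α :=
  if h : l.length = n then List.ofFn (fun j : Fin n => l.get ((σ.symm j).cast h.symm))
  else l

/-! ### Promotion -/

/-- Promotion `S^! = ∑_{n≥0} (1/n!) Sⁿ` of a vector of resource terms, where
`Sⁿ = [S,…,S]` (`n` copies) is the sum over all `n`-tuples; its coefficient on
a multiset `m` of cardinality `n` is `(1/n!) · #{enumerations of m} · ∏_{t ∈ m} S t`. -/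
noncomputable def prom (S : ResTerm → ℚ≥0) (m : Multiset ResTerm) : ℚ≥0 :=
  (Nat.card {l : List ResTerm // (↑l : Multiset ResTerm) = m} : ℚ≥0) /
      (Nat.factorial (Multiset.card m)) * (m.map S).prod



/-! ### Auxiliary lemmas for the proof -/

section Aux

private lemma exists_perm_comp_aux {α : Type*} [LinearOrder α] {n : ℕ} (f g : Fin n → α)
    (h : (List.ofFn f).Perm (List.ofFn g)) : ∃ σ : Equiv.Perm (Fin n), g = f ∘ σ := by
  refine ⟨(Tuple.sort g).symm.trans (Tuple.sort f), ?_⟩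
  have key : f ∘ Tuple.sort f = g ∘ Tuple.sort g := by
    apply List.ofFn_injective
    haveI : IsAntisymm α (· ≤ ·) := ⟨fun _ _ => le_antisymm⟩
    refine (fun h1 h2 h3 => List.Perm.eq_of_sortedLE h2 h3 h1) ?_ ?_ ?_
    · exact ((Tuple.sort f).ofFn_comp_perm f).trans
        (h.trans ((Tuple.sort g).ofFn_comp_perm g).symm)
    · exact (Tuple.monotone_sort f).sortedLE_ofFn
    · exact (Tuple.monotone_sort g).sortedLE_ofFn
  funext x
  have := congrFun key ((Tuple.sort g).symm x)
  simpa using this.symm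

private lemma permList_length {α : Type*} {n : ℕ} (σ : Equiv.Perm (Fin n)) (l : List α)
    (h : l.length = n) : (permList σ l).length = n := by
  simp [permList, h]

private lemma permList_eq_ofFn {α : Type*} {n : ℕ} (σ : Equiv.Perm (Fin n)) (l : List α)
    (h : l.length = n) :
    permList σ l = List.ofFn (fun j : Fin n => l.get ((σ.symm j).cast h.symm)) := by
  simp [permList, h]

private lemma permList_one {α : Type*} {n : ℕ} (l : List α) :
    permList (1 : Equiv.Perm (Fin n)) l = l := by
  by_cases h : l.length = n
  · rw [permList_eq_ofFn _ _ h]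
    apply List.ext_get (by simp [h])
    intro i h1 h2
    simp [List.get_ofFn, Equiv.Perm.one_symm]
  · simp [permList, h]

private lemma permList_mul {α : Type*} {n : ℕ} (σ τ : Equiv.Perm (Fin n)) (l : List α) :
    permList (σ * τ) l = permList σ (permList τ l) := by
  by_cases h : l.length = n
  · have h2 : (permList τ l).length = n := permList_length τ l h
    apply List.ext_getElem (by rw [permList_length _ _ h, permList_length σ _ h2])
    intro i h1 h3
    rw [permList_length _ _ h] at h1
    simp only [permList_eq_ofFn σ _ h2, List.getElem_ofFn, List.get_eq_getElem, Fin.coe_cast]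
    simp only [permList_eq_ofFn _ _ h, List.getElem_ofFn, List.get_eq_getElem, Fin.coe_cast]
    congr 1
  · have h2 : (permList τ l).length ≠ n := by simp [permList, h]
    simp [permList, h, h2]

instance permListMulAction (α : Type*) (n : ℕ) :
    MulAction (Equiv.Perm (Fin n)) (List α) where
  smul σ l := permList σ l
  one_smul := permList_one
  mul_smul := permList_mul

private lemma permList_smul_def {α : Type*} {n : ℕ} (σ : Equiv.Perm (Fin n)) (l : List α) :
    σ • l = permList σ l := rfl

private lemma coe_permList {α : Type*} {n : ℕ} (σ : Equiv.Perm (Fin n)) (l : List α)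
    (h : l.length = n) : (↑(permList σ l) : Multiset α) = ↑l := by
  rw [permList_eq_ofFn _ _ h, Multiset.coe_eq_coe]
  have hl : l = List.ofFn (fun j : Fin n => l.get (j.cast h.symm)) := by
    apply List.ext_get (by simp [h])
    intro i h1 h2
    simp [List.get_ofFn]
  conv_rhs => rw [hl]
  have := Equiv.Perm.ofFn_comp_perm σ.symm (fun j : Fin n => l.get (j.cast h.symm))
  exact this

private lemma exists_permList {α : Type*} [LinearOrder α] {l l' : List α}
    (h : l'.Perm l) : ∃ σ : Equiv.Perm (Fin l.length), permList σ l = l' := by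
  have hn : l'.length = l.length := h.length_eq
  set f : Fin l.length → α := l.get with hf
  set g : Fin l.length → α := fun i => l'.get (i.cast hn.symm) with hg
  have hofg : List.ofFn g = l' := by
    apply List.ext_get (by simp [hn])
    intro i h1 h2
    simp [g, List.get_ofFn]
  have hoff : List.ofFn f = l := List.ofFn_get l
  have hperm : (List.ofFn f).Perm (List.ofFn g) := by
    rw [hofg, hoff]; exact h.symm
  obtain ⟨σ, hσ⟩ := exists_perm_comp_aux f g hperm
  refine ⟨σ.symm, ?_⟩
  rw [permList_eq_ofFn _ _ rfl, ← hofg]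
  congr 1
  funext j
  have := congrFun hσ j
  simpa [f, g] using this.symm

noncomputable instance : LinearOrder ResTerm := IsWellOrder.linearOrder WellOrderingRel

private lemma mem_orbit_iff_coe_eq (l l' : List ResTerm) :
    l' ∈ MulAction.orbit (Equiv.Perm (Fin l.length)) l ↔
      (↑l' : Multiset ResTerm) = ↑l := by
  constructor
  · rintro ⟨σ, rfl⟩
    exact coe_permList σ l rfl
  · intro hc
    obtain ⟨σ, hσ⟩ := exists_permList (Multiset.coe_eq_coe.mp hc)
    exact ⟨σ, hσ⟩

end Aux

/-! ### STATEMENT 3: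
If `s̄` is in the support of the promotion `S^!` and `(s₁,…,sₙ)` enumerates the
multiset `s̄`, then the coefficient of `s̄` in `S^!` is
`S^{s̄} / Card(St((s₁,…,sₙ)))`, where `S^{s̄} = ∏ᵢ S_{sᵢ}` and `St` is the
stabilizer of the tuple under the permutation action. -/
theorem coeff_promotion (S : ResTerm → ℚ≥0) (m : Multiset ResTerm)
    (hm : prom S m ≠ 0) (l : List ResTerm) (hl : (↑l : Multiset ResTerm) = m) :
    prom S m = (∏ i : Fin l.length, S (l.get i)) /
      (Nat.card {σ : Equiv.Perm (Fin l.length) // permList σ l = l} : ℚ≥0) := by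
  subst hl
  have e1 : {l' : List ResTerm // (↑l' : Multiset ResTerm) = ↑l} ≃
      MulAction.orbit (Equiv.Perm (Fin l.length)) l :=
    (Equiv.subtypeEquivRight fun l' => (mem_orbit_iff_coe_eq l l').symm).trans
      (Equiv.setCongr rfl)
  have e2 : {σ : Equiv.Perm (Fin l.length) // permList σ l = l} ≃
      MulAction.stabilizer (Equiv.Perm (Fin l.length)) l :=
    Equiv.subtypeEquivRight fun σ => by
      rw [MulAction.mem_stabilizer_iff, permList_smul_def]
  have key : Nat.card {l' : List ResTerm // (↑l' : Multiset ResTerm) = ↑l} *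
      Nat.card {σ : Equiv.Perm (Fin l.length) // permList σ l = l} =
      Nat.factorial l.length := by
    rw [Nat.card_congr e1, Nat.card_congr e2, ← Nat.card_prod,
      Nat.card_congr (MulAction.orbitProdStabilizerEquivGroup _ l),
      Nat.card_eq_fintype_card, Fintype.card_perm, Fintype.card_fin]
  set N := Nat.card {l' : List ResTerm // (↑l' : Multiset ResTerm) = ↑l} with hN
  set K := Nat.card {σ : Equiv.Perm (Fin l.length) // permList σ l = l} with hK
  have hKne : K ≠ 0 := by
    have : Nat.card (MulAction.stabilizer (Equiv.Perm (Fin l.length)) l) ≠ 0 :=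
      Nat.card_ne_zero.mpr ⟨⟨1, one_smul _ _⟩, inferInstance⟩
    rwa [hK, Nat.card_congr e2]
  have hfac : (Nat.factorial l.length : ℚ≥0) ≠ 0 := by
    exact_mod_cast Nat.factorial_ne_zero l.length
  have hKQ : (K : ℚ≥0) ≠ 0 := by exact_mod_cast hKne
  have hP : ((↑l : Multiset ResTerm).map S).prod = ∏ i : Fin l.length, S (l.get i) := by
    rw [Multiset.map_coe, Multiset.prod_coe, ← List.prod_ofFn]
    congr 1
    apply List.ext_get (by simp)
    intro i h1 h2
    simp [List.get_ofFn]
  have hcard : Multiset.card (↑l : Multiset ResTerm) = l.length := Multiset.coe_card l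
  rw [prom, hcard, hP]
  rw [div_mul_eq_mul_div, div_eq_div_iff hfac hKQ]
  have : ((N * K : ℕ) : ℚ≥0) = ((Nat.factorial l.length : ℕ) : ℚ≥0) := by
    exact_mod_cast congrArg (fun x : ℕ => (x : ℚ≥0)) key
  push_cast at this
  calc (N : ℚ≥0) * (∏ i : Fin l.length, S (l.get i)) * K
      = (∏ i : Fin l.length, S (l.get i)) * ((N : ℚ≥0) * K) := by ring
    _ = (∏ i : Fin l.length, S (l.get i)) * (Nat.factorial l.length : ℚ≥0) := by rw [this]
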